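/- arXiv:2201.11610 — 2 statements merged into one kernel-verified Lean document; each statement's English description precedes it below -/
import Mathlib

section
/- Let Σ be a bi-infinite Mallows permutation of ℤ with parameter 0 < q < 1. Then for every j ∈ ℤ, q · P(Σ(0) = j) ≤ P(Σ(0) = j+1) ≤ (1/q) · P(Σ(0) = j). -/
/-- The `q`-Pochhammer symbol `(q;q)_n = Π_{i=1}^n (1 - q^i)`. -/
def qPoch (q : ℝ) (n : ℕ) : ℝ := ∏ i ∈ Finset.range n, (1 - q ^ (i + 1))

/-- The infinite `q`-Pochhammer symbol `(q;q)_∞ = Π_{i=1}^∞ (1 - q^i)`. -/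
noncomputable def qPochInf (q : ℝ) : ℝ := ∏' i : ℕ, (1 - q ^ (i + 1))

/-- The one-point marginal of Gnedin–Olshanski's bi-infinite Mallows permutation
`Σ ∼ Mallows(ℤ, q)`:
`P(Σ(0) = d) = (1-q)(q;q)_∞ Σ_{r,l ≥ 0, r-l = d} q^{rl+r+l}/((q;q)_r (q;q)_l)`. -/
noncomputable def mallowsZMass (q : ℝ) (d : ℤ) : ℝ :=
  (1 - q) * qPochInf q *
    ∑' p : ℕ × ℕ,
      if (p.1 : ℤ) - (p.2 : ℤ) = d then
        q ^ (p.1 * p.2 + p.1 + p.2) / (qPoch q p.1 * qPoch q p.2)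
      else 0

namespace MallowsAux

/-- The generic summand. -/
noncomputable def mP (q : ℝ) (r l : ℕ) : ℝ :=
  q ^ (r * l + r + l) / (qPoch q r * qPoch q l)

/-- The summand of the one-dimensional reindexed sum. -/
noncomputable def mF (q : ℝ) (d : ℤ) (l : ℕ) : ℝ :=
  if 0 ≤ (l : ℤ) + d then mP q ((l : ℤ) + d).toNat l else 0

lemma qPoch_pos {q : ℝ} (hq0 : 0 < q) (hq1 : q < 1) (n : ℕ) : 0 < qPoch q n := by
  refine Finset.prod_pos fun i _ => ?_
  have : q ^ (i + 1) < 1 := pow_lt_one₀ hq0.le hq1 (Nat.succ_ne_zero i)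
  linarith

lemma qPoch_succ (q : ℝ) (n : ℕ) : qPoch q (n + 1) = qPoch q n * (1 - q ^ (n + 1)) :=
  Finset.prod_range_succ _ _

lemma qPoch_antitone {q : ℝ} (hq0 : 0 < q) (hq1 : q < 1) : Antitone (qPoch q) := by
  refine antitone_nat_of_succ_le fun n => ?_
  rw [qPoch_succ]
  have h1 : q ^ (n + 1) ≤ 1 := (pow_le_one₀ hq0.le hq1.le)
  have h2 : 0 < q ^ (n + 1) := pow_pos hq0 _
  nlinarith [qPoch_pos hq0 hq1 n]

/-- Weierstrass-type lower bound. -/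
lemma qPoch_ge_aux {q : ℝ} (hq0 : 0 < q) (hq1 : q < 1) (N : ℕ) :
    ∀ n : ℕ, qPoch q N * (1 - q ^ (N + 1) / (1 - q)) ≤ qPoch q (N + n) := by
  have hq' : 0 < 1 - q := by linarith
  have key : ∀ n : ℕ, qPoch q N * (1 - ∑ i ∈ Finset.range n, q ^ (N + 1 + i)) ≤
      qPoch q (N + n) := by
    intro n
    induction n with
    | zero => simp
    | succ n ih =>
      have hx : 0 ≤ q ^ (N + n + 1) := pow_pos hq0 _ |>.le
      have hx1 : q ^ (N + n + 1) ≤ 1 := pow_le_one₀ hq0.le hq1.le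
      have hs : 0 ≤ ∑ i ∈ Finset.range n, q ^ (N + 1 + i) :=
        Finset.sum_nonneg fun i _ => (pow_pos hq0 _).le
      have h2 : qPoch q (N + n) * (1 - q ^ (N + n + 1)) = qPoch q (N + (n + 1)) := by
        rw [show N + (n + 1) = (N + n) + 1 by ring, qPoch_succ]
      rw [Finset.sum_range_succ]
      have h3 : qPoch q N * (1 - ∑ i ∈ Finset.range n, q ^ (N + 1 + i)) * (1 - q ^ (N + n + 1))
          ≤ qPoch q (N + n) * (1 - q ^ (N + n + 1)) :=
        mul_le_mul_of_nonneg_right ih (by linarith)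
      rw [h2] at h3
      refine le_trans ?_ h3
      have hPN : 0 < qPoch q N := qPoch_pos hq0 hq1 N
      have : q ^ (N + 1 + n) = q ^ (N + n + 1) := by ring_nf
      rw [this]
      nlinarith [mul_nonneg (mul_nonneg hPN.le hs) hx]
  intro n
  refine le_trans ?_ (key n)
  have hPN : 0 < qPoch q N := qPoch_pos hq0 hq1 N
  have hsum : ∑ i ∈ Finset.range n, q ^ (N + 1 + i) ≤ q ^ (N + 1) / (1 - q) := by
    have : ∑ i ∈ Finset.range n, q ^ (N + 1 + i)
        = q ^ (N + 1) * ∑ i ∈ Finset.range n, q ^ i := by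
      rw [Finset.mul_sum]
      refine Finset.sum_congr rfl fun i _ => ?_
      rw [← pow_add]
    rw [this]
    have hgeo : ∑ i ∈ Finset.range n, q ^ i ≤ 1 / (1 - q) := by
      have hle := Summable.sum_le_tsum (Finset.range n) (fun i _ => (pow_pos hq0 i).le)
        (summable_geometric_of_lt_one hq0.le hq1)
      rw [tsum_geometric_of_lt_one hq0.le hq1] at hle
      rw [one_div]
      exact hle
    calc q ^ (N + 1) * ∑ i ∈ Finset.range n, q ^ i
        ≤ q ^ (N + 1) * (1 / (1 - q)) :=
          mul_le_mul_of_nonneg_left hgeo (pow_pos hq0 _).le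
      _ = q ^ (N + 1) / (1 - q) := by ring
  nlinarith

/-- Uniform positive lower bound for `qPoch`. -/
lemma qPoch_lower {q : ℝ} (hq0 : 0 < q) (hq1 : q < 1) :
    ∃ c : ℝ, 0 < c ∧ ∀ n, c ≤ qPoch q n := by
  have hq' : 0 < 1 - q := by linarith
  obtain ⟨N, hN⟩ := exists_pow_lt_of_lt_one (by linarith : (0:ℝ) < (1 - q) / 2) hq1
  refine ⟨qPoch q N * (1 - q ^ (N + 1) / (1 - q)), ?_, ?_⟩
  · have hPN : 0 < qPoch q N := qPoch_pos hq0 hq1 N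
    have h1 : q ^ (N + 1) ≤ q ^ N * q := by rw [pow_succ]
    have h2 : q ^ N * q < (1 - q) / 2 := by
      calc q ^ N * q ≤ q ^ N * 1 := by
            exact mul_le_mul_of_nonneg_left hq1.le (pow_pos hq0 N).le
        _ = q ^ N := by ring
        _ < (1 - q) / 2 := hN
    have : q ^ (N + 1) / (1 - q) < 1 / 2 := by
      rw [div_lt_iff₀ hq']
      nlinarith
    nlinarith
  · intro n
    rcases le_or_gt n N with h | h
    · refine le_trans ?_ (qPoch_antitone hq0 hq1 h)
      have hPN : 0 < qPoch q N := qPoch_pos hq0 hq1 N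
      have h0 : 0 ≤ q ^ (N + 1) / (1 - q) := div_nonneg (pow_pos hq0 _).le hq'.le
      nlinarith
    · obtain ⟨m, rfl⟩ := Nat.exists_eq_add_of_le h.le
      exact qPoch_ge_aux hq0 hq1 N m

lemma mP_nonneg {q : ℝ} (hq0 : 0 < q) (hq1 : q < 1) (r l : ℕ) : 0 ≤ mP q r l :=
  div_nonneg (pow_pos hq0 _).le
    (mul_nonneg (qPoch_pos hq0 hq1 r).le (qPoch_pos hq0 hq1 l).le)

lemma mF_nonneg {q : ℝ} (hq0 : 0 < q) (hq1 : q < 1) (d : ℤ) (l : ℕ) : 0 ≤ mF q d l := by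
  unfold mF
  split
  · exact mP_nonneg hq0 hq1 _ _
  · exact le_refl 0

lemma mF_summable {q : ℝ} (hq0 : 0 < q) (hq1 : q < 1) (d : ℤ) : Summable (mF q d) := by
  obtain ⟨c, hc0, hc⟩ := qPoch_lower hq0 hq1
  have hbound : ∀ l, mF q d l ≤ q ^ l / (c * c) := by
    intro l
    unfold mF
    split
    · unfold mP
      set r := (((l : ℤ) + d).toNat) with hr
      refine div_le_div₀ (pow_nonneg hq0.le l) ?_ (by positivity) ?_
      · exact pow_le_pow_of_le_one hq0.le hq1.le (Nat.le_add_left l _)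
      · exact mul_le_mul (hc r) (hc l) hc0.le (qPoch_pos hq0 hq1 r).le
    · positivity
  refine Summable.of_nonneg_of_le (mF_nonneg hq0 hq1 d) hbound ?_
  exact (summable_geometric_of_lt_one hq0.le hq1).div_const _

/-- The key termwise three-term identity on the `mP` level. -/
lemma mP_rec {q : ℝ} (hq0 : 0 < q) (hq1 : q < 1) (r l : ℕ) :
    mP q (r + 1) l =
      q * (q ^ l * mP q r l) + (1 / q) * ((1 - q ^ (l + 1)) * mP q (r + 1) (l + 1)) := by
  unfold mP
  have e1 : (r + 1) * l + (r + 1) + l = (r * l + r + l) + (l + 1) := by ring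
  have e2 : (r + 1) * (l + 1) + (r + 1) + (l + 1) = (r * l + r + l) + (l + 1) + (r + 1) + 1 := by
    ring
  rw [e1, e2, qPoch_succ q r, qPoch_succ q l]
  have hq : q ≠ 0 := hq0.ne'
  have hPr : qPoch q r ≠ 0 := (qPoch_pos hq0 hq1 r).ne'
  have hPl : qPoch q l ≠ 0 := (qPoch_pos hq0 hq1 l).ne'
  have hr1 : (1 : ℝ) - q ^ (r + 1) ≠ 0 := by
    have : q ^ (r + 1) < 1 := pow_lt_one₀ hq0.le hq1 (Nat.succ_ne_zero r)
    intro h; rw [sub_eq_zero] at h; rw [← h] at this; exact lt_irrefl _ this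
  have hl1 : (1 : ℝ) - q ^ (l + 1) ≠ 0 := by
    have : q ^ (l + 1) < 1 := pow_lt_one₀ hq0.le hq1 (Nat.succ_ne_zero l)
    intro h; rw [sub_eq_zero] at h; rw [← h] at this; exact lt_irrefl _ this
  field_simp
  ring

/-- The boundary case `r = 0` coming from `l + d = -1`. -/
lemma mP_rec₀ {q : ℝ} (hq0 : 0 < q) (hq1 : q < 1) (l : ℕ) :
    mP q 0 l = (1 / q) * ((1 - q ^ (l + 1)) * mP q 0 (l + 1)) := by
  unfold mP
  have e1 : 0 * l + 0 + l = l := by ring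
  have e2 : 0 * (l + 1) + 0 + (l + 1) = l + 1 := by ring
  rw [e1, e2, qPoch_succ q l]
  have hq : q ≠ 0 := hq0.ne'
  have hPl : qPoch q l ≠ 0 := (qPoch_pos hq0 hq1 l).ne'
  have hl1 : (1 : ℝ) - q ^ (l + 1) ≠ 0 := by
    have : q ^ (l + 1) < 1 := pow_lt_one₀ hq0.le hq1 (Nat.succ_ne_zero l)
    intro h; rw [sub_eq_zero] at h; rw [← h] at this; exact lt_irrefl _ this
  have : qPoch q 0 = 1 := by simp [qPoch]
  rw [this]
  field_simp
  ring

/-- The key termwise identity on the `mF` level, valid for all `l` and `d`. -/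
lemma mF_rec {q : ℝ} (hq0 : 0 < q) (hq1 : q < 1) (d : ℤ) (l : ℕ) :
    mF q (d + 1) l =
      q * (q ^ l * mF q d l) + (1 / q) * ((1 - q ^ (l + 1)) * mF q d (l + 1)) := by
  unfold mF
  rcases le_or_gt 0 ((l : ℤ) + d) with h | h
  · set r := ((l : ℤ) + d).toNat with hrdef
    have hr : ((l : ℤ) + d) = (r : ℤ) := by simp [hrdef, Int.toNat_of_nonneg h]
    have h1 : 0 ≤ (l : ℤ) + (d + 1) := by omega
    have h2 : 0 ≤ ((l : ℕ) + 1 : ℤ) + d := by push_cast; omega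
    have ht1 : ((l : ℤ) + (d + 1)).toNat = r + 1 := by omega
    have ht2 : (((l : ℕ) + 1 : ℤ) + d).toNat = r + 1 := by push_cast; omega
    rw [if_pos h1, if_pos h, ht1]
    have : (((l + 1 : ℕ) : ℤ) + d).toNat = r + 1 := by push_cast; omega
    rw [if_pos (by push_cast; omega : (0:ℤ) ≤ ((l + 1 : ℕ) : ℤ) + d), this]
    exact mP_rec hq0 hq1 r l
  · rcases le_or_gt 0 ((l : ℤ) + (d + 1)) with h' | h'
    · -- l + d = -1
      have hd : (l : ℤ) + d = -1 := by omega
      have ht1 : ((l : ℤ) + (d + 1)).toNat = 0 := by omega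
      have h2 : 0 ≤ ((l + 1 : ℕ) : ℤ) + d := by push_cast; omega
      have ht2 : (((l + 1 : ℕ) : ℤ) + d).toNat = 0 := by push_cast; omega
      rw [if_pos h', ht1, if_neg (not_le.mpr h), if_pos h2, ht2]
      rw [mul_zero, mul_zero, zero_add]
      exact mP_rec₀ hq0 hq1 l
    · have h2 : ¬ (0 : ℤ) ≤ ((l + 1 : ℕ) : ℤ) + d := by push_cast; omega
      rw [if_neg (not_le.mpr h'), if_neg (not_le.mpr h), if_neg h2]
      ring

/-- Reindexing the two-dimensional sum to a one-dimensional one. -/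
lemma tsum_pair_eq {q : ℝ} (d : ℤ) :
    (∑' p : ℕ × ℕ,
      if (p.1 : ℤ) - (p.2 : ℤ) = d then
        q ^ (p.1 * p.2 + p.1 + p.2) / (qPoch q p.1 * qPoch q p.2)
      else 0) = ∑' l : ℕ, mF q d l := by
  set F : ℕ × ℕ → ℝ := fun p =>
    if (p.1 : ℤ) - (p.2 : ℤ) = d then
      q ^ (p.1 * p.2 + p.1 + p.2) / (qPoch q p.1 * qPoch q p.2)
    else 0 with hF
  set g : ℕ → ℕ × ℕ := fun l => (((l : ℤ) + d).toNat, l) with hg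
  have hginj : Function.Injective g := by
    intro a b hab
    simpa [hg] using congrArg Prod.snd hab
  have hsupp : Function.support F ⊆ Set.range g := by
    intro p hp
    have hcond : (p.1 : ℤ) - (p.2 : ℤ) = d := by
      by_contra hcon
      exact hp (by simp [hF, hcon])
    refine ⟨p.2, ?_⟩
    have : ((p.2 : ℤ) + d) = (p.1 : ℤ) := by omega
    have h1 : ((p.2 : ℤ) + d).toNat = p.1 := by omega
    simp [hg, h1]
  have := hginj.tsum_eq (f := F) hsupp
  rw [← this]
  refine tsum_congr fun l => ?_
  rcases le_or_gt 0 ((l : ℤ) + d) with h | h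
  · have h1 : (((( (l : ℤ) + d).toNat : ℕ)) : ℤ) = (l : ℤ) + d := Int.toNat_of_nonneg h
    have hcond : (((g l).1 : ℤ)) - ((g l).2 : ℤ) = d := by
      simp only [hg]
      omega
    simp only [hF, hg, mF, if_pos h, hcond, if_pos]
    rw [if_pos (by omega)]
    rfl
  · have hcond : ¬ ((((g l).1 : ℤ)) - ((g l).2 : ℤ) = d) := by
      simp only [hg]
      omega
    have hz : mF q d l = 0 := by rw [mF, if_neg (not_le.mpr h)]
    rw [hz]
    simp only [hF]
    exact if_neg hcond

end MallowsAux

open MallowsAux in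
/-- For `Σ ∼ Mallows(ℤ, q)` with `0 < q < 1`, the one-point marginal satisfies
`q · P(Σ(0) = j) ≤ P(Σ(0) = j+1) ≤ (1/q) · P(Σ(0) = j)` for every `j ∈ ℤ`. -/
theorem mallowsZ_neighbor_ratio (q : ℝ) (hq0 : 0 < q) (hq1 : q < 1) (j : ℤ) :
    q * mallowsZMass q j ≤ mallowsZMass q (j + 1) ∧
    mallowsZMass q (j + 1) ≤ (1 / q) * mallowsZMass q j := by
  -- notation
  set S : ℤ → ℝ := fun d => ∑' l : ℕ, mF q d l with hSdef
  set W : ℤ → ℝ := fun d => ∑' l : ℕ, q ^ l * mF q d l with hWdef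
  have hmass : ∀ d : ℤ, mallowsZMass q d = (1 - q) * qPochInf q * S d := by
    intro d
    rw [mallowsZMass, tsum_pair_eq]
  -- summability facts
  have hSsum : ∀ d, Summable (mF q d) := fun d => mF_summable hq0 hq1 d
  have hWsum : ∀ d, Summable (fun l => q ^ l * mF q d l) := by
    intro d
    refine Summable.of_nonneg_of_le
      (fun l => mul_nonneg (pow_pos hq0 l).le (mF_nonneg hq0 hq1 d l)) (fun l => ?_) (hSsum d)
    exact mul_le_of_le_one_left (mF_nonneg hq0 hq1 d l) (pow_le_one₀ hq0.le hq1.le)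
  have hUsum : ∀ d, Summable (fun l => (1 - q ^ l) * mF q d l) := by
    intro d
    have : (fun l => (1 - q ^ l) * mF q d l)
        = fun l => mF q d l - q ^ l * mF q d l := by
      funext l; ring
    rw [this]
    exact (hSsum d).sub (hWsum d)
  -- the key identity  S (d+1) = q * W d + (1/q) * (S d - W d)
  have key : ∀ d : ℤ, S (d + 1) = q * W d + (1 / q) * (S d - W d) := by
    intro d
    have hshift : Summable (fun l => (1 - q ^ (l + 1)) * mF q d (l + 1)) := by
      have := (summable_nat_add_iff 1).2 (hUsum d)
      simpa using this
    have h1 : S (d + 1)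
        = ∑' l : ℕ, (q * (q ^ l * mF q d l)
            + (1 / q) * ((1 - q ^ (l + 1)) * mF q d (l + 1))) :=
      tsum_congr fun l => mF_rec hq0 hq1 d l
    rw [h1, Summable.tsum_add ((hWsum d).mul_left q) (hshift.mul_left (1 / q)),
      tsum_mul_left, tsum_mul_left]
    congr 1
    congr 1
    -- ∑' l, (1 - q^(l+1)) * mF q d (l+1) = S d - W d
    have h2 : ∑' l : ℕ, (1 - q ^ l) * mF q d l
        = (1 - q ^ 0) * mF q d 0 + ∑' l : ℕ, (1 - q ^ (l + 1)) * mF q d (l + 1) :=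
      Summable.tsum_eq_zero_add (hUsum d)
    have h3 : ∑' l : ℕ, (1 - q ^ l) * mF q d l = S d - W d := by
      have : (fun l => (1 - q ^ l) * mF q d l)
          = fun l => mF q d l - q ^ l * mF q d l := by funext l; ring
      rw [this, Summable.tsum_sub (hSsum d) (hWsum d)]
    rw [h3] at h2
    simp at h2
    linarith
  -- basic inequalities
  have hS0 : ∀ d, 0 ≤ S d := fun d => tsum_nonneg (mF_nonneg hq0 hq1 d)
  have hW0 : ∀ d, 0 ≤ W d := fun d =>
    tsum_nonneg fun l => mul_nonneg (pow_pos hq0 l).le (mF_nonneg hq0 hq1 d l)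
  have hWS : ∀ d, W d ≤ S d := fun d =>
    Summable.tsum_le_tsum (fun l =>
        mul_le_of_le_one_left (mF_nonneg hq0 hq1 d l) (pow_le_one₀ hq0.le hq1.le))
      (hWsum d) (hSsum d)
  have hqq : 0 ≤ 1 / q - q := by
    have h1 : (1:ℝ) ≤ 1 / q := by
      rw [le_div_iff₀ hq0]; nlinarith
    linarith
  -- the constant is nonnegative
  have hCpos : 0 ≤ (1 - q) * qPochInf q := by
    refine mul_nonneg (by linarith) ?_
    by_cases hm : Multipliable fun i : ℕ => 1 - q ^ (i + 1)
    · rw [qPochInf]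
      refine ge_of_tendsto' (x := Filter.atTop) hm.hasProd fun s => Finset.prod_nonneg fun i _ => ?_
      have : q ^ (i + 1) < 1 := pow_lt_one₀ hq0.le hq1 (Nat.succ_ne_zero i)
      linarith
    · rw [qPochInf, tprod_eq_one_of_not_multipliable hm]; norm_num
  -- conclude
  have e1 : S (j + 1) - q * S j = (1 / q - q) * (S j - W j) := by
    rw [key j]; ring
  have e2 : (1 / q) * S j - S (j + 1) = (1 / q - q) * W j := by
    rw [key j]; ring
  have h1 : q * S j ≤ S (j + 1) := by
    nlinarith [mul_nonneg hqq (sub_nonneg.2 (hWS j))]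
  have h2 : S (j + 1) ≤ (1 / q) * S j := by
    nlinarith [mul_nonneg hqq (hW0 j)]
  constructor
  · calc q * mallowsZMass q j = (1 - q) * qPochInf q * (q * S j) := by rw [hmass]; ring
      _ ≤ (1 - q) * qPochInf q * S (j + 1) := mul_le_mul_of_nonneg_left h1 hCpos
      _ = mallowsZMass q (j + 1) := (hmass _).symm
  · calc mallowsZMass q (j + 1) = (1 - q) * qPochInf q * S (j + 1) := hmass _
      _ ≤ (1 - q) * qPochInf q * ((1 / q) * S j) := mul_le_mul_of_nonneg_left h2 hCpos
      _ = (1 / q) * mallowsZMass q j := by rw [hmass]; ring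
end

section
/- Let Σ ∼ Mallows(ℤ, 1/q) with q > 1, and let r(i) = −i. Then the expected number of fixed points of r ∘ Σ equals P(Σ(0) is even), i.e., Σ_{i∈ℤ} P(Σ(i) = −i) = P(Σ(0) even). -/
open MeasureTheory

/-- Let `Σ ∼ Mallows(ℤ, 1/q)` with `q > 1` and `r i = -i`.  Then the expected number of
fixed points of `r ∘ Σ` equals `P(Σ(0) even)`: `Σ_{i ∈ ℤ} P(Σ(i) = -i) = P(Σ(0) even)`.
The key property of the bi-infinite Mallows permutation used is shift invariance:
`Σ(i) - i` has the same distribution as `Σ(0)`. -/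
theorem expected_fixed_points_r_comp
    {Ω : Type*} [MeasurableSpace Ω] (μ : Measure Ω) [IsProbabilityMeasure μ]
    (q : ℝ) (hq : 1 < q) (S : Ω → ℤ ≃ ℤ)
    (hmeas : ∀ i j : ℤ, MeasurableSet {ω | S ω i = j})
    (hshift : ∀ i j : ℤ, μ {ω | S ω i = j} = μ {ω | S ω 0 = j - i}) :
    ∑' i : ℤ, μ {ω | S ω i = -i} = μ {ω | Even (S ω 0)} := by
  have h1 : ∀ i : ℤ, μ {ω | S ω i = -i} = μ {ω | S ω 0 = -2 * i} := by
    intro i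
    rw [hshift]
    congr 1
    ext ω
    constructor <;> intro h <;> simp only [Set.mem_setOf_eq] at * <;> omega
  simp_rw [h1]
  rw [← measure_iUnion]
  · congr 1
    ext ω
    simp only [Set.mem_iUnion, Set.mem_setOf_eq]
    constructor
    · rintro ⟨i, hi⟩
      exact ⟨-i, by omega⟩
    · rintro ⟨r, hr⟩
      exact ⟨-r, by omega⟩
  · intro i j hij
    simp only [Function.onFun, Set.disjoint_left, Set.mem_setOf_eq]
    intro ω h1 h2
    omega
  · intro i
    exact hmeas 0 (-2 * i)
end
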